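/- The power function is Diophantine: there exist a number k ∈ ℕ and a polynomial p with integer coefficients in k+3 variables such that for all natural numbers x, y, w, one has x^y = w if and only if there exist natural numbers z₁, …, z_k with p(x, y, w, z₁, …, z_k) = 0. Equivalently, the set {(x, y, w) ∈ ℕ³ | x^y = w} is Diophantine. -/

import Mathlib

open Fin2 in
/-- The power function is Diophantine: the set `{(x, y, w) ∈ ℕ³ | x ^ y = w}` is
Diophantine. -/
theorem pow_is_diophantine : Dioph {v : Fin 3 → ℕ | v 0 ^ v 1 = v 2} := by
  have h : Dioph {v : Vector3 ℕ 3 | v fz ^ v (fs fz) = v (fs (fs fz))} :=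
    Dioph.eq_dioph (Dioph.pow_dioph (Dioph.proj_dioph fz) (Dioph.proj_dioph (fs fz)))
      (Dioph.proj_dioph (fs (fs fz)))
  have h2 := Dioph.reindex_dioph (Fin 3)
    (fun i : Fin2 3 => match i with
      | fz => (0 : Fin 3)
      | fs fz => 1
      | fs (fs fz) => 2) h
  convert h2 using 1
  rfl
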